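/- Let G be a Hausdorff locally compact group and N a fully invariant open subgroup of G (i.e., ψ(N) ⊆ N for every continuous endomorphism ψ of G). If AT(N) holds (for every continuous endomorphism ψ of N and every ψ-invariant closed normal subgroup K of N one has h_top(ψ) = h_top(ψ|_K) + h_top(ψ̄_{N/K})), then AT(G) holds: for every continuous endomorphism φ of G and every φ-invariant closed normal subgroup H of G, h_top(φ) = h_top(φ|_H) + h_top(φ̄_{G/H}). -/

import Mathlib

open MeasureTheory Filter Topology Pointwise
open scoped ENNReal NNReal Classical

/-- The `n`-th `φ`-cotrajectory of `U`: `U ∩ φ⁻¹(U) ∩ … ∩ φ⁻⁽ⁿ⁻¹⁾(U)`. -/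
def cotraj {G : Type*} (φ : G → G) (U : Set G) (n : ℕ) : Set G :=
  ⋂ k ∈ Finset.range n, (φ^[k]) ⁻¹' U

/-- Topological entropy of a (continuous) endomorphism of a locally compact Hausdorff
topological group, computed with respect to a left Haar measure:
`h_top(φ) = sup_U limsup_n (−log μ(C_n(φ,U)))/n`, the supremum over all compact
neighborhoods `U` of `1`. -/
noncomputable def mulHtop {G : Type*} [Group G] [TopologicalSpace G] (φ : G → G) : ℝ≥0∞ :=
  letI : MeasurableSpace G := borel G
  haveI : BorelSpace G := ⟨rfl⟩
  if h : IsTopologicalGroup G ∧ T2Space G ∧ LocallyCompactSpace G then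
    haveI := h.1
    haveI := h.2.1
    haveI := h.2.2
    ⨆ U ∈ {U : Set G | IsCompact U ∧ U ∈ 𝓝 (1 : G)},
      Filter.atTop.limsup fun n : ℕ =>
        ENNReal.ofReal
          ((-Real.log ((MeasureTheory.Measure.haar (cotraj φ U n)).toReal)) / n)
  else 0

/-- The restriction of an endomorphism to an invariant subgroup
(junk value `1` if the subgroup is not invariant). -/
noncomputable def mulSubHom {G : Type*} [Group G] (φ : G →* G) (H : Subgroup G) : H →* H :=
  if h : H ≤ H.comap φ then (φ.domRestrict H).codRestrict H (fun x => h x.2) else 1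

/-- The endomorphism induced on the quotient by an invariant normal subgroup
(junk value `1` if the subgroup is not invariant). -/
noncomputable def mulQuotHom {G : Type*} [Group G] (φ : G →* G) (H : Subgroup G) [H.Normal] :
    G ⧸ H →* G ⧸ H :=
  if h : H ≤ H.comap φ then QuotientGroup.map H H φ h else 1

section CotrajAux

lemma mem_cotraj {G : Type*} {φ : G → G} {U : Set G} {n : ℕ} {x : G} :
    x ∈ cotraj φ U n ↔ ∀ k < n, φ^[k] x ∈ U := by
  simp [cotraj]

lemma cotraj_mono {G : Type*} (φ : G → G) {U V : Set G} (h : U ⊆ V) (n : ℕ) :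
    cotraj φ U n ⊆ cotraj φ V n := fun x hx =>
  mem_cotraj.2 fun k hk => h (mem_cotraj.1 hx k hk)

lemma cotraj_subset {G : Type*} (φ : G → G) (U : Set G) {n : ℕ} (hn : 1 ≤ n) :
    cotraj φ U n ⊆ U := fun x hx => by
  simpa using mem_cotraj.1 hx 0 hn

lemma cotraj_mem_nhds_one {G : Type*} [Group G] [TopologicalSpace G]
    (φ : G →* G) (hφ : Continuous ⇑φ) {U : Set G} (hU : U ∈ 𝓝 (1 : G)) (n : ℕ) :
    cotraj ⇑φ U n ∈ 𝓝 (1 : G) := by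
  rw [cotraj]
  refine (Filter.biInter_finset_mem _).2 fun k _ => ?_
  have h1 : (⇑φ)^[k] 1 = 1 := Function.iterate_fixed (map_one φ) k
  exact (hφ.iterate k).continuousAt.preimage_mem_nhds (by rwa [h1])

lemma iterate_comm {G₁ G₂ : Type*} {j : G₁ → G₂} {φ₁ : G₁ → G₁} {φ₂ : G₂ → G₂}
    (hcomm : ∀ x, j (φ₁ x) = φ₂ (j x)) (k : ℕ) (x : G₁) :
    j (φ₁^[k] x) = φ₂^[k] (j x) := by
  induction k generalizing x with
  | zero => simp
  | succ k ih =>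
    rw [Function.iterate_succ_apply, Function.iterate_succ_apply, ih, hcomm]

lemma image_cotraj {G₁ G₂ : Type*} {j : G₁ → G₂} (hji : Function.Injective j)
    {φ₁ : G₁ → G₁} {φ₂ : G₂ → G₂} (hcomm : ∀ x, j (φ₁ x) = φ₂ (j x))
    (U : Set G₁) {n : ℕ} (hn : 1 ≤ n) :
    j '' cotraj φ₁ U n = cotraj φ₂ (j '' U) n := by
  ext y
  constructor
  · rintro ⟨x, hx, rfl⟩
    refine mem_cotraj.2 fun k hk => ?_
    rw [← iterate_comm hcomm]
    exact ⟨_, mem_cotraj.1 hx k hk, rfl⟩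
  · intro hy
    obtain ⟨x, -, rfl⟩ : y ∈ j '' U := by simpa using mem_cotraj.1 hy 0 hn
    refine ⟨x, mem_cotraj.2 fun k hk => ?_, rfl⟩
    have := mem_cotraj.1 hy k hk
    rw [← iterate_comm hcomm] at this
    obtain ⟨u, hu, hju⟩ := this
    rwa [← hji hju]

end CotrajAux

section LimsupAux

lemma limsup_le_limsup_of_le_add {u v w : ℕ → ℝ≥0∞} (hw : Tendsto w atTop (𝓝 0))
    (h : ∀ᶠ n in atTop, u n ≤ v n + w n) : atTop.limsup u ≤ atTop.limsup v := by
  refine ENNReal.le_of_forall_pos_le_add fun ε hε hv => ?_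
  have hε2 : (0 : ℝ≥0∞) < (ε : ℝ≥0∞) / 2 :=
    ENNReal.div_pos (by exact_mod_cast hε.ne') (by norm_num)
  have h1 : atTop.limsup v < atTop.limsup v + (ε : ℝ≥0∞) / 2 :=
    ENNReal.lt_add_right hv.ne hε2.ne'
  have h2 := Filter.eventually_lt_of_limsup_lt h1
  have h3 : ∀ᶠ n in atTop, w n < (ε : ℝ≥0∞) / 2 := hw.eventually (gt_mem_nhds hε2)
  refine Filter.limsup_le_of_le (by isBoundedDefault) ?_
  filter_upwards [h, h2, h3] with n hn h2n h3n
  calc u n ≤ v n + w n := hn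
    _ ≤ (atTop.limsup v + (ε : ℝ≥0∞) / 2) + (ε : ℝ≥0∞) / 2 := add_le_add h2n.le h3n.le
    _ = atTop.limsup v + (ε : ℝ≥0∞) := by rw [add_assoc, ENNReal.add_halves]

lemma limsup_ofReal_add_div (x : ℕ → ℝ) (c : ℝ) :
    atTop.limsup (fun n => ENNReal.ofReal ((c + x n) / n)) =
      atTop.limsup (fun n => ENNReal.ofReal (x n / n)) := by
  have hw : Tendsto (fun n : ℕ => ENNReal.ofReal (|c| / n)) atTop (𝓝 0) := by
    rw [← ENNReal.ofReal_zero]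
    exact ENNReal.tendsto_ofReal (tendsto_const_div_atTop_nhds_zero_nat |c|)
  have habs : ∀ n : ℕ, |c / (n : ℝ)| ≤ |c| / n := fun n => by
    rw [abs_div, Nat.abs_cast]
  apply le_antisymm
  · refine limsup_le_limsup_of_le_add hw (Eventually.of_forall fun n => ?_)
    have h1 := (abs_le.1 (habs n)).2
    have : (c + x n) / n ≤ x n / n + |c| / n := by
      rw [add_div]; linarith
    exact le_trans (ENNReal.ofReal_le_ofReal this) ENNReal.ofReal_add_le
  · refine limsup_le_limsup_of_le_add hw (Eventually.of_forall fun n => ?_)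
    have h1 := (abs_le.1 (habs n)).1
    have : x n / n ≤ (c + x n) / n + |c| / n := by
      rw [add_div]; linarith
    exact le_trans (ENNReal.ofReal_le_ofReal this) ENNReal.ofReal_add_le

end LimsupAux

noncomputable def entTerm {G : Type*} [MeasurableSpace G] (μ : Measure G) (φ : G → G)
    (U : Set G) (n : ℕ) : ℝ≥0∞ :=
  ENNReal.ofReal ((-Real.log ((μ (cotraj φ U n)).toReal)) / n)

section EntAux

variable {G : Type*} [Group G] [TopologicalSpace G] [IsTopologicalGroup G]
  [T2Space G] [LocallyCompactSpace G] [MeasurableSpace G] [BorelSpace G]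
  (μ : Measure G) [μ.IsHaarMeasure]

lemma measure_cotraj_pos (φ : G →* G) (hφ : Continuous ⇑φ) {U : Set G}
    (hU : U ∈ 𝓝 (1 : G)) (n : ℕ) : 0 < μ (cotraj ⇑φ U n) :=
  Measure.measure_pos_of_mem_nhds μ (cotraj_mem_nhds_one φ hφ hU n)

lemma measure_cotraj_lt_top (φ : G → G) {U : Set G} (hU : IsCompact U) {n : ℕ}
    (hn : 1 ≤ n) : μ (cotraj φ U n) < ∞ :=
  lt_of_le_of_lt (measure_mono (cotraj_subset φ U hn)) hU.measure_lt_top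

lemma entL_mono (φ : G →* G) (hφ : Continuous ⇑φ) {U V : Set G}
    (hUn : U ∈ 𝓝 (1 : G)) (hVc : IsCompact V) (hsub : U ⊆ V) :
    atTop.limsup (entTerm μ ⇑φ V) ≤ atTop.limsup (entTerm μ ⇑φ U) := by
  refine Filter.limsup_le_limsup ?_ (by isBoundedDefault) (by isBoundedDefault)
  filter_upwards [Filter.eventually_ge_atTop 1] with n hn
  have hUV : μ (cotraj ⇑φ U n) ≤ μ (cotraj ⇑φ V n) := measure_mono (cotraj_mono _ hsub n)
  have hfin : μ (cotraj ⇑φ V n) < ∞ := measure_cotraj_lt_top μ ⇑φ hVc hn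
  have hpos : 0 < (μ (cotraj ⇑φ U n)).toReal :=
    ENNReal.toReal_pos (measure_cotraj_pos μ φ hφ hUn n).ne' (lt_of_le_of_lt hUV hfin).ne
  have h2 : (μ (cotraj ⇑φ U n)).toReal ≤ (μ (cotraj ⇑φ V n)).toReal :=
    ENNReal.toReal_mono hfin.ne hUV
  apply ENNReal.ofReal_le_ofReal
  have hlog : Real.log (μ (cotraj ⇑φ U n)).toReal ≤ Real.log (μ (cotraj ⇑φ V n)).toReal :=
    Real.log_le_log hpos h2
  gcongr

end EntAux

section Transfer

variable {G₁ G₂ : Type*} [Group G₁] [TopologicalSpace G₁] [IsTopologicalGroup G₁]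
  [T2Space G₁] [LocallyCompactSpace G₁] [MeasurableSpace G₁] [BorelSpace G₁]
  [Group G₂] [TopologicalSpace G₂] [IsTopologicalGroup G₂]
  [T2Space G₂] [LocallyCompactSpace G₂] [MeasurableSpace G₂] [BorelSpace G₂]
  (μ₁ : Measure G₁) (μ₂ : Measure G₂) [μ₁.IsHaarMeasure] [μ₂.IsHaarMeasure]

lemma comap_isHaarMeasure (j : G₁ →* G₂) (hjc : Continuous ⇑j)
    (hji : Function.Injective ⇑j) (hjo : IsOpenMap ⇑j) :
    (μ₂.comap ⇑j).IsHaarMeasure := by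
  have hemb : Topology.IsOpenEmbedding ⇑j :=
    Topology.IsOpenEmbedding.of_continuous_injective_isOpenMap hjc hji hjo
  have hν : ∀ s : Set G₁, μ₂.comap ⇑j s = μ₂ (⇑j '' s) := fun s =>
    hemb.measurableEmbedding.comap_apply μ₂ s
  haveI h1 : (μ₂.comap ⇑j).IsMulLeftInvariant := by
    constructor
    intro g
    ext s hs
    rw [Measure.map_apply (measurable_const_mul g) hs, hν, hν]
    have him : ⇑j '' ((fun x => g * x) ⁻¹' s) = (fun y => j g * y) ⁻¹' (⇑j '' s) := by
      ext y
      constructor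
      · rintro ⟨x, hx, rfl⟩
        exact ⟨g * x, hx, map_mul j g x⟩
      · rintro ⟨z, hz, hzy⟩
        refine ⟨g⁻¹ * z, ?_, ?_⟩
        · simpa using hz
        · rw [map_mul, map_inv, hzy]
          exact inv_mul_cancel_left _ _
    rw [him, measure_preimage_mul]
  haveI h2 : IsFiniteMeasureOnCompacts (μ₂.comap ⇑j) := by
    constructor
    intro K hK
    rw [hν]
    exact (hK.image hjc).measure_lt_top
  haveI h3 : (μ₂.comap ⇑j).IsOpenPosMeasure := by
    constructor
    intro U hU hne
    rw [hν]
    exact (hjo U hU).measure_ne_zero μ₂ (hne.image ⇑j)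
  constructor

lemma entL_image (j : G₁ →* G₂) (hjc : Continuous ⇑j)
    (hji : Function.Injective ⇑j) (hjo : IsOpenMap ⇑j)
    (φ₁ : G₁ →* G₁) (φ₂ : G₂ →* G₂) (hc₁ : Continuous ⇑φ₁)
    (hcomm : ∀ x, j (φ₁ x) = φ₂ (j x))
    {U : Set G₁} (hUc : IsCompact U) (hUn : U ∈ 𝓝 (1 : G₁)) :
    atTop.limsup (entTerm μ₂ ⇑φ₂ (⇑j '' U)) = atTop.limsup (entTerm μ₁ ⇑φ₁ U) := by
  have hemb : Topology.IsOpenEmbedding ⇑j :=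
    Topology.IsOpenEmbedding.of_continuous_injective_isOpenMap hjc hji hjo
  have hν : ∀ s : Set G₁, μ₂.comap ⇑j s = μ₂ (⇑j '' s) := fun s =>
    hemb.measurableEmbedding.comap_apply μ₂ s
  haveI := comap_isHaarMeasure μ₂ j hjc hji hjo
  set c : ℝ≥0 := Measure.haarScalarFactor (μ₂.comap ⇑j) μ₁ with hc_def
  have hc : 0 < c := Measure.haarScalarFactor_pos_of_isHaarMeasure _ _
  set y : ℕ → ℝ := fun n => -Real.log ((μ₁ (cotraj ⇑φ₁ U n)).toReal) with hy
  have key : ∀ᶠ n in atTop, entTerm μ₂ ⇑φ₂ (⇑j '' U) n =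
      ENNReal.ofReal ((-Real.log c.toReal + y n) / n) := by
    filter_upwards [Filter.eventually_ge_atTop 1] with n hn
    have hmeq : μ₂ (cotraj ⇑φ₂ (⇑j '' U) n) = (c : ℝ≥0∞) * μ₁ (cotraj ⇑φ₁ U n) := by
      rw [← image_cotraj hji hcomm U hn, ← hν]
      exact Measure.measure_isMulInvariant_eq_smul_of_isCompact_closure _ _
        (hUc.closure_of_subset (cotraj_subset ⇑φ₁ U hn))
    have hpos : 0 < μ₁ (cotraj ⇑φ₁ U n) := measure_cotraj_pos μ₁ φ₁ hc₁ hUn n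
    have hfin : μ₁ (cotraj ⇑φ₁ U n) < ∞ := measure_cotraj_lt_top μ₁ ⇑φ₁ hUc hn
    have htr : (μ₂ (cotraj ⇑φ₂ (⇑j '' U) n)).toReal
        = c.toReal * (μ₁ (cotraj ⇑φ₁ U n)).toReal := by
      rw [hmeq, ENNReal.toReal_mul, ENNReal.coe_toReal]
    have htpos : 0 < (μ₁ (cotraj ⇑φ₁ U n)).toReal := ENNReal.toReal_pos hpos.ne' hfin.ne
    rw [entTerm, htr, Real.log_mul (by exact_mod_cast hc.ne') htpos.ne', neg_add, hy]
  calc atTop.limsup (entTerm μ₂ ⇑φ₂ (⇑j '' U))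
      = atTop.limsup (fun n => ENNReal.ofReal ((-Real.log c.toReal + y n) / n)) :=
        Filter.limsup_congr key
    _ = atTop.limsup (fun n => ENNReal.ofReal (y n / n)) :=
        limsup_ofReal_add_div y (-Real.log c.toReal)
    _ = atTop.limsup (entTerm μ₁ ⇑φ₁ U) := rfl

lemma iSup_entL_eq (j : G₁ →* G₂) (hjc : Continuous ⇑j)
    (hji : Function.Injective ⇑j) (hjo : IsOpenMap ⇑j)
    (φ₁ : G₁ →* G₁) (φ₂ : G₂ →* G₂) (hc₁ : Continuous ⇑φ₁) (hc₂ : Continuous ⇑φ₂)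
    (hcomm : ∀ x, j (φ₁ x) = φ₂ (j x)) :
    (⨆ U ∈ {U : Set G₁ | IsCompact U ∧ U ∈ 𝓝 (1 : G₁)},
        atTop.limsup (entTerm μ₁ ⇑φ₁ U)) =
      ⨆ U ∈ {U : Set G₂ | IsCompact U ∧ U ∈ 𝓝 (1 : G₂)},
        atTop.limsup (entTerm μ₂ ⇑φ₂ U) := by
  have hemb : Topology.IsOpenEmbedding ⇑j :=
    Topology.IsOpenEmbedding.of_continuous_injective_isOpenMap hjc hji hjo
  apply le_antisymm
  · refine iSup₂_le fun U hU => ?_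
    rw [← entL_image μ₁ μ₂ j hjc hji hjo φ₁ φ₂ hc₁ hcomm hU.1 hU.2]
    exact le_iSup₂_of_le (⇑j '' U)
      ⟨hU.1.image hjc, by simpa [map_one j] using hjo.image_mem_nhds hU.2⟩ le_rfl
  · refine iSup₂_le fun U hU => ?_
    have hrn : Set.range ⇑j ∈ 𝓝 (1 : G₂) :=
      hemb.isOpen_range.mem_nhds ⟨1, map_one j⟩
    obtain ⟨V, hVn, hVr, hVc⟩ := local_compact_nhds hrn
    have hWc : IsCompact (U ∩ V) := hU.1.inter hVc
    have hWn : U ∩ V ∈ 𝓝 (1 : G₂) := Filter.inter_mem hU.2 hVn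
    have hWr : U ∩ V ⊆ Set.range ⇑j := fun x hx => hVr hx.2
    have hU₁c : IsCompact (⇑j ⁻¹' (U ∩ V)) := hemb.isInducing.isCompact_preimage' hWc hWr
    have hU₁n : ⇑j ⁻¹' (U ∩ V) ∈ 𝓝 (1 : G₁) :=
      hjc.continuousAt.preimage_mem_nhds (by rwa [map_one])
    have him : ⇑j '' (⇑j ⁻¹' (U ∩ V)) = U ∩ V := Set.image_preimage_eq_of_subset hWr
    calc atTop.limsup (entTerm μ₂ ⇑φ₂ U)
        ≤ atTop.limsup (entTerm μ₂ ⇑φ₂ (U ∩ V)) :=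
          entL_mono μ₂ φ₂ hc₂ hWn hU.1 Set.inter_subset_left
      _ = atTop.limsup (entTerm μ₁ ⇑φ₁ (⇑j ⁻¹' (U ∩ V))) := by
          conv_lhs => rw [← him]
          exact entL_image μ₁ μ₂ j hjc hji hjo φ₁ φ₂ hc₁ hcomm hU₁c hU₁n
      _ ≤ _ := le_iSup₂_of_le (⇑j ⁻¹' (U ∩ V)) ⟨hU₁c, hU₁n⟩ le_rfl

end Transfer

section Glue

lemma mulHtop_eq {G : Type*} [Group G] [TopologicalSpace G] [IsTopologicalGroup G]
    [T2Space G] [LocallyCompactSpace G] (φ : G → G) :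
    mulHtop φ =
      (letI : MeasurableSpace G := borel G
       haveI : BorelSpace G := ⟨rfl⟩
       ⨆ U ∈ {U : Set G | IsCompact U ∧ U ∈ 𝓝 (1 : G)},
         atTop.limsup (entTerm Measure.haar φ U)) := by
  simp only [mulHtop]
  rw [dif_pos ⟨‹_›, ‹_›, ‹_›⟩]
  rfl

lemma mulHtop_eq_of_hom {G₁ G₂ : Type*} [Group G₁] [TopologicalSpace G₁] [IsTopologicalGroup G₁]
    [T2Space G₁] [LocallyCompactSpace G₁]
    [Group G₂] [TopologicalSpace G₂] [IsTopologicalGroup G₂]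
    [T2Space G₂] [LocallyCompactSpace G₂]
    (j : G₁ →* G₂) (hjc : Continuous ⇑j)
    (hji : Function.Injective ⇑j) (hjo : IsOpenMap ⇑j)
    (φ₁ : G₁ →* G₁) (φ₂ : G₂ →* G₂) (hc₁ : Continuous ⇑φ₁) (hc₂ : Continuous ⇑φ₂)
    (hcomm : ∀ x, j (φ₁ x) = φ₂ (j x)) :
    mulHtop ⇑φ₁ = mulHtop ⇑φ₂ := by
  letI m₁ : MeasurableSpace G₁ := borel G₁
  haveI b₁ : BorelSpace G₁ := ⟨rfl⟩
  letI m₂ : MeasurableSpace G₂ := borel G₂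
  haveI b₂ : BorelSpace G₂ := ⟨rfl⟩
  rw [mulHtop_eq ⇑φ₁, mulHtop_eq ⇑φ₂]
  exact iSup_entL_eq Measure.haar Measure.haar j hjc hji hjo φ₁ φ₂ hc₁ hc₂ hcomm

lemma mulSubHom_coe {G : Type*} [Group G] (φ : G →* G) {H : Subgroup G}
    (h : H ≤ H.comap φ) (x : H) : (mulSubHom φ H x : G) = φ x := by
  rw [mulSubHom, dif_pos h]; rfl

lemma mulSubHom_continuous {G : Type*} [Group G] [TopologicalSpace G] (φ : G →* G)
    (hφ : Continuous ⇑φ) {H : Subgroup G} (h : H ≤ H.comap φ) :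
    Continuous ⇑(mulSubHom φ H) := by
  rw [mulSubHom, dif_pos h]
  exact Continuous.subtype_mk (hφ.comp continuous_subtype_val) _

lemma mulQuotHom_mk {G : Type*} [Group G] (φ : G →* G) {H : Subgroup G} [H.Normal]
    (h : H ≤ H.comap φ) (x : G) :
    mulQuotHom φ H (x : G ⧸ H) = ((φ x : G) : G ⧸ H) := by
  rw [mulQuotHom, dif_pos h]
  exact QuotientGroup.map_mk H H φ h x

lemma mulQuotHom_continuous {G : Type*} [Group G] [TopologicalSpace G] [IsTopologicalGroup G]
    (φ : G →* G) (hφ : Continuous ⇑φ) {H : Subgroup G} [H.Normal] (h : H ≤ H.comap φ) :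
    Continuous ⇑(mulQuotHom φ H) := by
  rw [(QuotientGroup.isQuotientMap_mk H).continuous_iff]
  have heq : (⇑(mulQuotHom φ H)) ∘ (QuotientGroup.mk : G → G ⧸ H)
      = fun g : G => ((φ g : G) : G ⧸ H) := funext fun g => mulQuotHom_mk φ h g
  rw [heq]
  exact QuotientGroup.continuous_mk.comp hφ

end Glue

/-- The Addition Theorem `AT(G)` for a topological group `G`: for every continuous
endomorphism `φ` and every `φ`-invariant closed normal subgroup `H`,
`h_top(φ) = h_top(φ|_H) + h_top(φ̄_{G/H})`. -/
def MulAT (G : Type*) [Group G] [TopologicalSpace G] : Prop :=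
  ∀ (φ : G →* G), Continuous φ → ∀ (H : Subgroup G), IsClosed (H : Set G) →
    ∀ (hn : H.Normal), H ≤ H.comap φ →
      letI := hn
      mulHtop ⇑φ = mulHtop ⇑(mulSubHom φ H) + mulHtop ⇑(mulQuotHom φ H)

/-- If `N` is a fully invariant open subgroup of a locally compact group
`G` and the Addition Theorem `AT(N)` holds, then `AT(G)` holds. -/
theorem AT_of_AT_fullyInvariant_open_subgroup
    (G : Type*) [Group G] [TopologicalSpace G] [IsTopologicalGroup G]
    [T2Space G] [LocallyCompactSpace G]
    (N : Subgroup G) (hNopen : IsOpen (N : Set G))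
    (hNfull : ∀ ψ : G →* G, Continuous ψ → N ≤ N.comap ψ)
    (hATN : MulAT N) :
    MulAT G := by
  intro φ hφ H hHc hn hinv
  haveI := hn
  haveI hLCN : LocallyCompactSpace N := hNopen.locallyCompactSpace
  have hψinv : N ≤ N.comap φ := hNfull φ hφ
  set ψ : ↥N →* ↥N := mulSubHom φ N with hψ_def
  have hψc : Continuous ⇑ψ := mulSubHom_continuous φ hφ hψinv
  have hψcoe : ∀ x : ↥N, (ψ x : G) = φ (x : G) := fun x => mulSubHom_coe φ hψinv x
  set K : Subgroup ↥N := H.subgroupOf N with hK_def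
  have hKc : IsClosed (K : Set ↥N) := by
    have h2 : (K : Set ↥N) = (Subtype.val : ↥N → G) ⁻¹' (H : Set G) := by
      rw [hK_def, Subgroup.coe_subgroupOf]; rfl
    rw [h2]
    exact hHc.preimage continuous_subtype_val
  haveI hKn : K.Normal := hn.subgroupOf N
  have hKinv : K ≤ K.comap ψ := by
    intro x hx
    have hx' : (x : G) ∈ H := Subgroup.mem_subgroupOf.1 hx
    refine Subgroup.mem_comap.2 (Subgroup.mem_subgroupOf.2 ?_)
    rw [hψcoe x]
    exact hinv hx'
  haveI hKcl : IsClosed (K : Set ↥N) := hKc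
  haveI hHcl : IsClosed (H : Set G) := hHc
  haveI hLCH : LocallyCompactSpace ↥H := hHc.locallyCompactSpace
  haveI hLCK : LocallyCompactSpace ↥K := hKc.locallyCompactSpace
  -- AT(N)
  have hAT := hATN ψ hψc K hKc hKn hKinv
  -- step (1): mulHtop φ = mulHtop ψ
  have e1 : mulHtop ⇑ψ = mulHtop ⇑φ :=
    mulHtop_eq_of_hom N.subtype continuous_subtype_val Subtype.coe_injective
      hNopen.isOpenMap_subtype_val ψ φ hψc hφ hψcoe
  -- step (2)
  let j₂ : ↥K →* ↥H :=
    MonoidHom.mk' (fun x => ⟨((x : ↥N) : G), Subgroup.mem_subgroupOf.1 x.2⟩) (fun a b => rfl)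
  have hj₂ : Topology.IsOpenEmbedding ⇑j₂ := by
    have hrange : Set.range ⇑j₂ = (Subtype.val : ↥H → G) ⁻¹' (N : Set G) := by
      ext y
      constructor
      · rintro ⟨x, rfl⟩
        exact (x : ↥N).2
      · intro hy
        exact ⟨⟨⟨(y : G), hy⟩, Subgroup.mem_subgroupOf.2 y.2⟩, Subtype.ext rfl⟩
    refine ⟨?_, ?_⟩
    · refine Topology.IsEmbedding.of_comp (Continuous.subtype_mk
        (continuous_subtype_val.comp continuous_subtype_val) _) continuous_subtype_val ?_
      have hce : (Subtype.val : ↥H → G) ∘ ⇑j₂ =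
          (Subtype.val : ↥N → G) ∘ (Subtype.val : ↥K → ↥N) := funext fun _ => rfl
      rw [hce]
      exact Topology.IsEmbedding.subtypeVal.comp Topology.IsEmbedding.subtypeVal
    · rw [hrange]
      exact hNopen.preimage continuous_subtype_val
  have e2 : mulHtop ⇑(mulSubHom ψ K) = mulHtop ⇑(mulSubHom φ H) := by
    refine mulHtop_eq_of_hom j₂ hj₂.continuous hj₂.injective hj₂.isOpenMap
      (mulSubHom ψ K) (mulSubHom φ H) (mulSubHom_continuous ψ hψc hKinv)
      (mulSubHom_continuous φ hφ hinv) ?_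
    intro x
    apply Subtype.ext
    show ((mulSubHom ψ K x : ↥N) : G) = ((mulSubHom φ H (j₂ x)) : G)
    rw [mulSubHom_coe ψ hKinv x, mulSubHom_coe φ hinv (j₂ x), hψcoe]
    rfl
  -- step (3)
  let f : ↥N →* G ⧸ H := (QuotientGroup.mk' H).comp N.subtype
  have hKf : K ≤ f.ker := by
    intro x hx
    rw [MonoidHom.mem_ker]
    show ((x : G) : G ⧸ H) = 1
    rw [QuotientGroup.eq_one_iff]
    exact Subgroup.mem_subgroupOf.1 hx
  let j₃ : ↥N ⧸ K →* G ⧸ H := QuotientGroup.lift K f hKf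
  have hj₃mk : ∀ x : ↥N, j₃ ((x : ↥N ⧸ K)) = ((x : G) : G ⧸ H) := fun x => rfl
  have hj₃c : Continuous ⇑j₃ := by
    rw [(QuotientGroup.isQuotientMap_mk K).continuous_iff]
    exact QuotientGroup.continuous_mk.comp continuous_subtype_val
  have hj₃i : Function.Injective ⇑j₃ := by
    intro a b
    refine QuotientGroup.induction_on a fun x => QuotientGroup.induction_on b fun y h => ?_
    rw [hj₃mk, hj₃mk, QuotientGroup.eq] at h
    rw [QuotientGroup.eq]
    exact Subgroup.mem_subgroupOf.2 h
  have hj₃o : IsOpenMap ⇑j₃ := by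
    intro V hV
    have hcomp : ⇑j₃ '' V = (QuotientGroup.mk : G → G ⧸ H) ''
        ((Subtype.val : ↥N → G) '' ((QuotientGroup.mk : ↥N → ↥N ⧸ K) ⁻¹' V)) := by
      conv_lhs => rw [← Set.image_preimage_eq V QuotientGroup.mk_surjective]
      rw [← Set.image_comp, ← Set.image_comp]
      rfl
    rw [hcomp]
    exact QuotientGroup.isOpenMap_coe _
      (hNopen.isOpenMap_subtype_val _ (hV.preimage QuotientGroup.continuous_mk))
  have e3 : mulHtop ⇑(mulQuotHom ψ K) = mulHtop ⇑(mulQuotHom φ H) := by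
    refine mulHtop_eq_of_hom j₃ hj₃c hj₃i hj₃o (mulQuotHom ψ K) (mulQuotHom φ H)
      (mulQuotHom_continuous ψ hψc hKinv) (mulQuotHom_continuous φ hφ hinv) ?_
    intro x
    refine QuotientGroup.induction_on x fun z => ?_
    rw [mulQuotHom_mk ψ hKinv z, hj₃mk, hj₃mk, mulQuotHom_mk φ hinv, hψcoe]
  show mulHtop ⇑φ = mulHtop ⇑(mulSubHom φ H) + mulHtop ⇑(mulQuotHom φ H)
  rw [← e1, ← e2, ← e3]
  exact hAT
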